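/- arXiv:1902.07941 — 2 statements merged into one kernel-verified Lean document; each statement's English description precedes it below -/
import Mathlib

section
/- The map X ↦ Φ(X⁻¹)⁻¹ is concave on positive definite matrices: for positive definite X, Y and t ∈ [0,1], Φ((tX + (1−t)Y)⁻¹)⁻¹ ≥ tΦ(X⁻¹)⁻¹ + (1−t)Φ(Y⁻¹)⁻¹, where Φ is a strictly positive linear map between matrix algebras. -/
open Matrix ComplexOrder

section AuxLemmas

variable {m n : ℕ}

private lemma real_smul_matrix (r : ℝ) (M : Matrix (Fin m) (Fin m) ℂ) :
    r • M = (r : ℂ) • M := by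
  ext i j
  simp [Matrix.smul_apply, Complex.real_smul]

private lemma smul_posDef {M : Matrix (Fin m) (Fin m) ℂ} (hM : M.PosDef)
    {r : ℝ} (hr : 0 < r) : ((r : ℂ) • M).PosDef := by
  refine Matrix.PosDef.of_dotProduct_mulVec_pos ?_ (fun x hx => ?_)
  · have : ((r : ℂ) • M)ᴴ = star (r : ℂ) • Mᴴ := conjTranspose_smul (r : ℂ) M
    rw [Matrix.IsHermitian, this, hM.isHermitian.eq, Complex.star_def, Complex.conj_ofReal]
  · rw [smul_mulVec, dotProduct_smul, smul_eq_mul]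
    exact mul_pos (by exact_mod_cast Complex.zero_lt_real.mpr hr) (hM.dotProduct_mulVec_pos hx)

private lemma quad_sum {F : Fin m → Matrix (Fin n) (Fin n) ℂ} (y z : Fin n → ℂ) :
    star y ⬝ᵥ ((∑ j, F j) *ᵥ z) = ∑ j, star y ⬝ᵥ (F j *ᵥ z) := by
  classical
  induction (Finset.univ : Finset (Fin m)) using Finset.induction with
  | empty => simp
  | insert _ _ h ih => rw [Finset.sum_insert h, Finset.sum_insert h, add_mulVec, dotProduct_add, ih]

private lemma posMap_posSemidef
    (Φ : Matrix (Fin m) (Fin m) ℂ →ₗ[ℂ] Matrix (Fin n) (Fin n) ℂ)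
    (hΦ : ∀ A : Matrix (Fin m) (Fin m) ℂ, A.PosDef → (Φ A).PosDef)
    {M : Matrix (Fin m) (Fin m) ℂ} (hM : M.PosSemidef) : (Φ M).PosSemidef := by
  have hI : (Φ 1).PosDef := hΦ _ Matrix.PosDef.one
  have h1 : (Φ (M + 1)).PosDef := hΦ _ (Matrix.PosDef.posSemidef_add hM Matrix.PosDef.one)
  have hrw : Φ M = Φ (M + 1) - Φ 1 := by rw [map_add]; abel
  refine Matrix.PosSemidef.of_dotProduct_mulVec_nonneg (by rw [hrw]; exact h1.isHermitian.sub hI.isHermitian) fun x => ?_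
  by_cases hx : x = 0
  · simp [hx]
  · have key : ∀ ε : ℝ, 0 < ε →
        0 < star x ⬝ᵥ (Φ M *ᵥ x) + (ε : ℂ) * (star x ⬝ᵥ (Φ 1 *ᵥ x)) := by
      intro ε hε
      have hp : (M + (ε : ℂ) • 1).PosDef :=
        Matrix.PosDef.posSemidef_add hM (smul_posDef Matrix.PosDef.one hε)
      have h2 := (hΦ _ hp).dotProduct_mulVec_pos hx
      rwa [map_add, _root_.map_smul, add_mulVec, smul_mulVec, dotProduct_add,
        dotProduct_smul, smul_eq_mul] at h2
    set a := star x ⬝ᵥ (Φ M *ᵥ x) with ha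
    set b := star x ⬝ᵥ (Φ 1 *ᵥ x) with hb
    have hbpos : 0 < b := hI.dotProduct_mulVec_pos hx
    have hbre : 0 < b.re := (Complex.lt_def.mp hbpos).1
    have hbim : b.im = 0 := ((Complex.lt_def.mp hbpos).2).symm
    have haim : a.im = 0 := by
      have h1' := (Complex.lt_def.mp (key 1 one_pos)).2
      simpa [hbim] using h1'.symm
    rw [Complex.le_def]
    refine ⟨?_, by simp [haim]⟩
    simp only [Complex.zero_re]
    by_contra hlt
    push_neg at hlt
    have hε : 0 < -a.re / (2 * b.re) := div_pos (by linarith) (by linarith)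
    have h2 := (Complex.lt_def.mp (key _ hε)).1
    simp only [Complex.add_re, Complex.mul_re, Complex.ofReal_re, Complex.ofReal_im,
      Complex.zero_re] at h2
    rw [hbim] at h2
    have : a.re + (-a.re / (2 * b.re)) * b.re = a.re / 2 := by field_simp; ring
    nlinarith

private lemma dot_conj (M K K' : Matrix (Fin n) (Fin n) ℂ) (x : Fin n → ℂ) :
    star (K *ᵥ x) ⬝ᵥ (M *ᵥ (K' *ᵥ x)) = star x ⬝ᵥ ((Kᴴ * M * K') *ᵥ x) := by
  rw [star_mulVec, mulVec_mulVec, dotProduct_mulVec, vecMul_vecMul,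
    dotProduct_mulVec, Matrix.mul_assoc]

private lemma dot_conj_left (M K : Matrix (Fin n) (Fin n) ℂ) (x : Fin n → ℂ) :
    star (K *ᵥ x) ⬝ᵥ (M *ᵥ x) = star x ⬝ᵥ ((Kᴴ * M) *ᵥ x) := by
  rw [star_mulVec, dotProduct_mulVec, vecMul_vecMul, dotProduct_mulVec]

private lemma diagonal_sum_smul (c : Fin m → ℝ) :
    (∑ k, (c k : ℂ) • (diagonal (Pi.single k 1) : Matrix (Fin m) (Fin m) ℂ))
      = diagonal (fun k => (c k : ℂ)) := by
  ext i j
  rw [Matrix.sum_apply]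
  by_cases h : i = j
  · subst h
    simp [Matrix.diagonal_apply, Pi.single_apply]
  · simp [Matrix.diagonal_apply_ne _ h, Pi.single_apply,
      Matrix.diagonal_apply, h]

private lemma schur_key
    (Φ : Matrix (Fin m) (Fin m) ℂ →ₗ[ℂ] Matrix (Fin n) (Fin n) ℂ)
    (hΦ : ∀ A : Matrix (Fin m) (Fin m) ℂ, A.PosDef → (Φ A).PosDef)
    {A C : Matrix (Fin m) (Fin m) ℂ} (hA : A.PosDef) (hC : C.PosSemidef) :
    (Φ (C * A⁻¹ * C) - Φ C * (Φ A)⁻¹ * Φ C).PosSemidef := by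
  classical
  have hRex : ∃ R : Matrix (Fin m) (Fin m) ℂ, R.PosSemidef ∧ R * R = A := by
    open scoped MatrixOrder in
    exact ⟨CFC.sqrt A, (CFC.sqrt_nonneg A).posSemidef,
      CFC.sqrt_mul_sqrt_self A hA.posSemidef.nonneg⟩
  obtain ⟨R, hRpsd, hRR⟩ := hRex
  have hRH : R.IsHermitian := hRpsd.isHermitian
  have hAdet : IsUnit A.det := (Matrix.isUnit_iff_isUnit_det A).mp hA.isUnit
  have hRdet : IsUnit R.det := by
    have h : R.det * R.det = A.det := by rw [← Matrix.det_mul, hRR]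
    exact isUnit_of_mul_isUnit_left (h ▸ hAdet)
  have hRiR : R⁻¹ * R = 1 := Matrix.nonsing_inv_mul R hRdet
  have hRRi : R * R⁻¹ = 1 := Matrix.mul_nonsing_inv R hRdet
  have hRiH : R⁻¹.IsHermitian := hRH.inv
  set N := R⁻¹ * C * R⁻¹ with hNdef
  have hNpsd : N.PosSemidef := by
    have h := hC.mul_mul_conjTranspose_same R⁻¹
    rwa [hRiH.eq] at h
  have hNH : N.IsHermitian := hNpsd.isHermitian
  set U : Matrix (Fin m) (Fin m) ℂ := (hNH.eigenvectorUnitary : Matrix (Fin m) (Fin m) ℂ) with hUdef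
  have hUU : U * star U = 1 :=
    (Matrix.mem_unitaryGroup_iff).mp hNH.eigenvectorUnitary.2
  have hUU' : star U * U = 1 :=
    (Matrix.mem_unitaryGroup_iff').mp hNH.eigenvectorUnitary.2
  set ν : Fin m → ℝ := hNH.eigenvalues with hνdef
  set Dν : Matrix (Fin m) (Fin m) ℂ := diagonal (fun k => (ν k : ℂ)) with hDdef
  have hspec : N = U * Dν * star U := hNH.spectral_theorem
  set L := R * U with hLdef
  have hLstar : star L = star U * R := by
    rw [hLdef, Matrix.star_mul, Matrix.star_eq_conjTranspose R, hRH.eq]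
  set O : Fin m → Matrix (Fin m) (Fin m) ℂ :=
    fun k => L * diagonal (Pi.single k 1) * star L with hOdef
  have hO : ∀ k, (O k).PosSemidef := by
    intro k
    have hE : (diagonal (Pi.single k 1) : Matrix (Fin m) (Fin m) ℂ).PosSemidef := by
      refine Matrix.PosSemidef.diagonal ?_
      intro i
      rw [Pi.single_apply]
      split <;> simp
    have h := hE.mul_mul_conjTranspose_same L
    rwa [← Matrix.star_eq_conjTranspose] at h
  have hsum : ∀ c : Fin m → ℝ,
      (∑ k, (c k : ℂ) • O k) = L * diagonal (fun k => (c k : ℂ)) * star L := by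
    intro c
    calc (∑ k, (c k : ℂ) • O k)
        = ∑ k, L * ((c k : ℂ) • diagonal (Pi.single k 1)) * star L := by
          refine Finset.sum_congr rfl fun k _ => ?_
          rw [mul_smul_comm, smul_mul_assoc]
      _ = L * (∑ k, (c k : ℂ) • diagonal (Pi.single k 1)) * star L := by
          rw [Finset.mul_sum, ← Finset.sum_mul]
      _ = L * diagonal (fun k => (c k : ℂ)) * star L := by
          rw [diagonal_sum_smul]
  -- cancellation helpers
  have cR : ∀ M : Matrix (Fin m) (Fin m) ℂ, R * (R⁻¹ * M) = M := by
    intro M; rw [← Matrix.mul_assoc, hRRi, Matrix.one_mul]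
  have cRi : ∀ M : Matrix (Fin m) (Fin m) ℂ, R⁻¹ * (R * M) = M := by
    intro M; rw [← Matrix.mul_assoc, hRiR, Matrix.one_mul]
  have cU' : ∀ M : Matrix (Fin m) (Fin m) ℂ, star U * (U * M) = M := by
    intro M; rw [← Matrix.mul_assoc, hUU', Matrix.one_mul]
  have hMat_A : (∑ k, O k) = A := by
    have h := hsum (fun _ => 1)
    simp only [Complex.ofReal_one, one_smul] at h
    rw [h]
    have h1 : (diagonal (fun _ : Fin m => (1 : ℂ))) = (1 : Matrix (Fin m) (Fin m) ℂ) :=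
      Matrix.diagonal_one
    rw [h1, Matrix.mul_one, hLdef, hLstar]
    calc R * U * (star U * R) = R * (U * (star U * R)) := by rw [Matrix.mul_assoc]
      _ = R * ((U * star U) * R) := by rw [Matrix.mul_assoc]
      _ = R * R := by rw [hUU, Matrix.one_mul]
      _ = A := hRR
  have hRNR : R * N * R = C := by
    rw [hNdef]
    calc R * (R⁻¹ * C * R⁻¹) * R = R * (R⁻¹ * (C * (R⁻¹ * R))) := by
          simp only [Matrix.mul_assoc]
      _ = C := by rw [hRiR, Matrix.mul_one, cR]
  have hMat_C : (∑ k, (ν k : ℂ) • O k) = C := by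
    rw [hsum ν, hLdef, hLstar, ← hRNR, hspec]
    simp only [Matrix.mul_assoc]
    rfl
  have hAinv : A⁻¹ = R⁻¹ * R⁻¹ := by rw [← hRR, Matrix.mul_inv_rev]
  have hMat_CAC : (∑ k, ((ν k * ν k : ℝ) : ℂ) • O k) = C * A⁻¹ * C := by
    rw [hsum]
    have hD2 : (diagonal (fun k => ((ν k * ν k : ℝ) : ℂ)) : Matrix (Fin m) (Fin m) ℂ)
        = Dν * Dν := by
      rw [hDdef, Matrix.diagonal_mul_diagonal]
      congr 1
      funext k
      push_cast
      ring
    rw [hD2, ← hRNR, hAinv, hspec, hLdef, hLstar]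
    simp only [Matrix.mul_assoc]
    rw [cR, cRi, cU']
  -- map identities
  have hPhiA : Φ A = ∑ k, Φ (O k) := by rw [← hMat_A, map_sum]
  have hPhiC : Φ C = ∑ k, (ν k : ℂ) • Φ (O k) := by
    rw [← hMat_C, map_sum]
    exact Finset.sum_congr rfl fun k _ => Φ.map_smul _ _
  have hPhiCAC : Φ (C * A⁻¹ * C) = ∑ k, ((ν k * ν k : ℝ) : ℂ) • Φ (O k) := by
    rw [← hMat_CAC, map_sum]
    exact Finset.sum_congr rfl fun k _ => Φ.map_smul _ _
  have block : ∀ y z : Fin n → ℂ,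
      0 ≤ star y ⬝ᵥ (Φ A *ᵥ y) + star y ⬝ᵥ (Φ C *ᵥ z) + star z ⬝ᵥ (Φ C *ᵥ y)
          + star z ⬝ᵥ (Φ (C * A⁻¹ * C) *ᵥ z) := by
    intro y z
    have hterm : ∀ k : Fin m,
        0 ≤ star y ⬝ᵥ (Φ (O k) *ᵥ y) + (ν k : ℂ) * (star y ⬝ᵥ (Φ (O k) *ᵥ z))
          + (ν k : ℂ) * (star z ⬝ᵥ (Φ (O k) *ᵥ y))
          + ((ν k * ν k : ℝ) : ℂ) * (star z ⬝ᵥ (Φ (O k) *ᵥ z)) := by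
      intro k
      have hF := (posMap_posSemidef Φ hΦ (hO k)).dotProduct_mulVec_nonneg (y + (ν k : ℂ) • z)
      have hstar : star (y + (ν k : ℂ) • z) = star y + (ν k : ℂ) • star z := by
        rw [star_add, star_smul, Complex.star_def, Complex.conj_ofReal]
      rw [hstar, mulVec_add, mulVec_smul] at hF
      calc (0 : ℂ) ≤ _ := hF
        _ = star y ⬝ᵥ (Φ (O k) *ᵥ y) + (ν k : ℂ) * (star y ⬝ᵥ (Φ (O k) *ᵥ z))
          + (ν k : ℂ) * (star z ⬝ᵥ (Φ (O k) *ᵥ y))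
          + ((ν k * ν k : ℝ) : ℂ) * (star z ⬝ᵥ (Φ (O k) *ᵥ z)) := by
            simp only [dotProduct_add, add_dotProduct, dotProduct_smul,
              smul_dotProduct, smul_eq_mul]
            push_cast
            ring
    have hsum0 : (0 : ℂ) ≤ ∑ k,
        (star y ⬝ᵥ (Φ (O k) *ᵥ y) + (ν k : ℂ) * (star y ⬝ᵥ (Φ (O k) *ᵥ z))
          + (ν k : ℂ) * (star z ⬝ᵥ (Φ (O k) *ᵥ y))
          + ((ν k * ν k : ℝ) : ℂ) * (star z ⬝ᵥ (Φ (O k) *ᵥ z))) :=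
      Finset.sum_nonneg fun k _ => hterm k
    calc (0:ℂ) ≤ _ := hsum0
      _ = star y ⬝ᵥ (Φ A *ᵥ y) + star y ⬝ᵥ (Φ C *ᵥ z) + star z ⬝ᵥ (Φ C *ᵥ y)
          + star z ⬝ᵥ (Φ (C * A⁻¹ * C) *ᵥ z) := by
        rw [Finset.sum_add_distrib, Finset.sum_add_distrib, Finset.sum_add_distrib]
        congr 1
        · congr 1
          · congr 1
            · rw [hPhiA, quad_sum]
            · rw [hPhiC, quad_sum]
              exact Finset.sum_congr rfl fun k _ => by
                rw [smul_mulVec, dotProduct_smul, smul_eq_mul]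
          · rw [hPhiC, quad_sum]
            exact Finset.sum_congr rfl fun k _ => by
              rw [smul_mulVec, dotProduct_smul, smul_eq_mul]
        · rw [hPhiCAC, quad_sum]
          exact Finset.sum_congr rfl fun k _ => by
            rw [smul_mulVec, dotProduct_smul, smul_eq_mul]
  -- conclude
  have hP : (Φ A).PosDef := hΦ A hA
  have hPH : (Φ A).IsHermitian := hP.isHermitian
  have hPiH : (Φ A)⁻¹.IsHermitian := hPH.inv
  have hSH : (Φ C).IsHermitian := (posMap_posSemidef Φ hΦ hC).isHermitian
  have hPdet : IsUnit (Φ A).det := (Matrix.isUnit_iff_isUnit_det _).mp hP.isUnit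
  have hPPi : Φ A * (Φ A)⁻¹ = 1 := Matrix.mul_nonsing_inv _ hPdet
  have hCAC_psd : (C * A⁻¹ * C).PosSemidef := by
    have h := hA.inv.posSemidef.mul_mul_conjTranspose_same C
    rwa [hC.isHermitian.eq] at h
  refine Matrix.PosSemidef.of_dotProduct_mulVec_nonneg ?_ ?_
  · apply Matrix.IsHermitian.sub
    · exact (posMap_posSemidef Φ hΦ hCAC_psd).isHermitian
    · have h := Matrix.isHermitian_mul_mul_conjTranspose (Φ C) hPiH
      rwa [hSH.eq] at h
  · intro x
    set K : Matrix (Fin n) (Fin n) ℂ := -((Φ A)⁻¹ * Φ C) with hKdef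
    have hKH : Kᴴ = -(Φ C * (Φ A)⁻¹) := by
      rw [hKdef, conjTranspose_neg, conjTranspose_mul, hSH.eq, hPiH.eq]
    have hb := block (K *ᵥ x) x
    rw [dot_conj (Φ A) K K x, dot_conj_left (Φ C) K x, mulVec_mulVec] at hb
    have i1 : Kᴴ * Φ A * K = Φ C * (Φ A)⁻¹ * Φ C := by
      rw [hKH, hKdef, neg_mul, neg_mul_neg]
      calc Φ C * (Φ A)⁻¹ * Φ A * ((Φ A)⁻¹ * Φ C)
          = Φ C * ((Φ A)⁻¹ * (Φ A * ((Φ A)⁻¹ * Φ C))) := by simp only [Matrix.mul_assoc]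
        _ = Φ C * ((Φ A)⁻¹ * Φ C) := by rw [← Matrix.mul_assoc (Φ A), hPPi, Matrix.one_mul]
        _ = Φ C * (Φ A)⁻¹ * Φ C := by rw [Matrix.mul_assoc]
    have i2 : Kᴴ * Φ C = -(Φ C * (Φ A)⁻¹ * Φ C) := by
      rw [hKH, neg_mul, Matrix.mul_assoc]
    have i3 : Φ C * K = -(Φ C * (Φ A)⁻¹ * Φ C) := by
      rw [hKdef, Matrix.mul_neg, Matrix.mul_assoc]
    rw [i1, i2, i3, neg_mulVec, dotProduct_neg] at hb
    rw [sub_mulVec, dotProduct_sub]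
    convert hb using 1
    ring

end AuxLemmas

/-- Concavity of `X ↦ Φ(X⁻¹)⁻¹` for a strictly positive linear map `Φ`. -/
theorem posMap_inv_inv_concave {m n : ℕ}
    (Φ : Matrix (Fin m) (Fin m) ℂ →ₗ[ℂ] Matrix (Fin n) (Fin n) ℂ)
    (hΦ : ∀ A : Matrix (Fin m) (Fin m) ℂ, A.PosDef → (Φ A).PosDef)
    (X Y : Matrix (Fin m) (Fin m) ℂ) (hX : X.PosDef) (hY : Y.PosDef)
    (t : ℝ) (ht0 : 0 ≤ t) (ht1 : t ≤ 1) :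
    ((Φ ((t • X + (1 - t) • Y)⁻¹))⁻¹ -
      (t • (Φ X⁻¹)⁻¹ + (1 - t) • (Φ Y⁻¹)⁻¹)).PosSemidef := by
  rcases eq_or_lt_of_le ht0 with h0 | h0
  · rw [← h0]
    simp only [zero_smul, sub_zero, one_smul, zero_add, sub_self]
    exact Matrix.PosSemidef.zero
  rcases eq_or_lt_of_le ht1 with h1 | h1
  · rw [h1]
    simp only [one_smul, sub_self, zero_smul, add_zero]
    exact Matrix.PosSemidef.zero
  have h1t : 0 < 1 - t := by linarith
  set Z := t • X + (1 - t) • Y with hZdef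
  have hZc : Z = (t : ℂ) • X + ((1 - t : ℝ) : ℂ) • Y := by
    rw [hZdef, real_smul_matrix, real_smul_matrix]
  have htX : ((t : ℂ) • X).PosDef := smul_posDef hX h0
  have htY : (((1 - t : ℝ) : ℂ) • Y).PosDef := smul_posDef hY h1t
  have hZ : Z.PosDef := by rw [hZc]; exact htX.add htY
  set A := ((t : ℂ) • X)⁻¹ with hAdef
  set B := (((1 - t : ℝ) : ℂ) • Y)⁻¹ with hBdef
  set C := Z⁻¹ with hCdef
  have hA : A.PosDef := htX.inv
  have hB : B.PosDef := htY.inv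
  have hC : C.PosDef := hZ.inv
  have hAinv : A⁻¹ = (t : ℂ) • X :=
    Matrix.nonsing_inv_nonsing_inv _ ((Matrix.isUnit_iff_isUnit_det _).mp htX.isUnit)
  have hBinv : B⁻¹ = ((1 - t : ℝ) : ℂ) • Y :=
    Matrix.nonsing_inv_nonsing_inv _ ((Matrix.isUnit_iff_isUnit_det _).mp htY.isUnit)
  have hZdet : IsUnit Z.det := (Matrix.isUnit_iff_isUnit_det _).mp hZ.isUnit
  have hCinv : C⁻¹ = Z := Matrix.nonsing_inv_nonsing_inv _ hZdet
  have hsplit : C * A⁻¹ * C + C * B⁻¹ * C = C := by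
    have h : C * A⁻¹ * C + C * B⁻¹ * C = C * (A⁻¹ + B⁻¹) * C := by
      rw [Matrix.mul_add, Matrix.add_mul]
    have hCdet : IsUnit C.det := (Matrix.isUnit_iff_isUnit_det _).mp hC.isUnit
    rw [h, hAinv, hBinv, ← hZc, ← hCinv, Matrix.mul_nonsing_inv _ hCdet, Matrix.one_mul]
  have key1 := schur_key Φ hΦ hA hC.posSemidef
  have key2 := schur_key Φ hΦ hB hC.posSemidef
  have keysum := key1.add key2
  have hΦsplit : Φ (C * A⁻¹ * C) + Φ (C * B⁻¹ * C) = Φ C := by rw [← map_add, hsplit]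
  have hcomb : (Φ (C * A⁻¹ * C) - Φ C * (Φ A)⁻¹ * Φ C)
      + (Φ (C * B⁻¹ * C) - Φ C * (Φ B)⁻¹ * Φ C)
      = Φ C - (Φ C * (Φ A)⁻¹ * Φ C + Φ C * (Φ B)⁻¹ * Φ C) := by
    rw [sub_add_sub_comm, hΦsplit]
  rw [hcomb] at keysum
  have hSpd : (Φ C).PosDef := hΦ _ hC
  have hSdet : IsUnit (Φ C).det := (Matrix.isUnit_iff_isUnit_det _).mp hSpd.isUnit
  have hSiH : (Φ C)⁻¹.IsHermitian := hSpd.isHermitian.inv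
  have hSiS : (Φ C)⁻¹ * Φ C = 1 := Matrix.nonsing_inv_mul _ hSdet
  have hSSi : Φ C * (Φ C)⁻¹ = 1 := Matrix.mul_nonsing_inv _ hSdet
  have conj := keysum.mul_mul_conjTranspose_same (Φ C)⁻¹
  have e1 : (Φ C)⁻¹ * (Φ C * (Φ A)⁻¹ * Φ C) * (Φ C)⁻¹ = (Φ A)⁻¹ := by
    calc (Φ C)⁻¹ * (Φ C * (Φ A)⁻¹ * Φ C) * (Φ C)⁻¹
        = (Φ C)⁻¹ * Φ C * (Φ A)⁻¹ * (Φ C * (Φ C)⁻¹) := by simp only [Matrix.mul_assoc]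
      _ = (Φ A)⁻¹ := by rw [hSiS, hSSi, Matrix.one_mul, Matrix.mul_one]
  have e2 : (Φ C)⁻¹ * (Φ C * (Φ B)⁻¹ * Φ C) * (Φ C)⁻¹ = (Φ B)⁻¹ := by
    calc (Φ C)⁻¹ * (Φ C * (Φ B)⁻¹ * Φ C) * (Φ C)⁻¹
        = (Φ C)⁻¹ * Φ C * (Φ B)⁻¹ * (Φ C * (Φ C)⁻¹) := by simp only [Matrix.mul_assoc]
      _ = (Φ B)⁻¹ := by rw [hSiS, hSSi, Matrix.one_mul, Matrix.mul_one]
  have hre : (Φ C)⁻¹ * (Φ C - (Φ C * (Φ A)⁻¹ * Φ C + Φ C * (Φ B)⁻¹ * Φ C)) * ((Φ C)⁻¹)ᴴ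
      = (Φ C)⁻¹ - ((Φ A)⁻¹ + (Φ B)⁻¹) := by
    rw [hSiH.eq, Matrix.mul_sub, Matrix.sub_mul, Matrix.mul_add, Matrix.add_mul, e1, e2]
    rw [Matrix.mul_assoc ((Φ C)⁻¹) (Φ C) ((Φ C)⁻¹), hSSi, Matrix.mul_one]
  rw [hre] at conj
  have hPA : (Φ A)⁻¹ = t • (Φ X⁻¹)⁻¹ := by
    have htne : (t : ℂ) ≠ 0 := Complex.ofReal_ne_zero.mpr h0.ne'
    have hXdet : IsUnit X.det := (Matrix.isUnit_iff_isUnit_det _).mp hX.isUnit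
    have h1 : A = (t : ℂ)⁻¹ • X⁻¹ := by
      rw [hAdef]
      refine Matrix.inv_eq_right_inv ?_
      rw [Matrix.smul_mul, Matrix.mul_smul, smul_smul,
        Matrix.mul_nonsing_inv _ hXdet, mul_inv_cancel₀ htne, one_smul]
    have hΦXdet : IsUnit (Φ X⁻¹).det :=
      (Matrix.isUnit_iff_isUnit_det _).mp (hΦ _ hX.inv).isUnit
    have h2 : ((t : ℂ)⁻¹ • Φ X⁻¹)⁻¹ = (t : ℂ) • (Φ X⁻¹)⁻¹ := by
      refine Matrix.inv_eq_right_inv ?_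
      rw [Matrix.smul_mul, Matrix.mul_smul, smul_smul,
        Matrix.mul_nonsing_inv _ hΦXdet, inv_mul_cancel₀ htne, one_smul]
    rw [h1, _root_.map_smul, h2, ← real_smul_matrix]
  have hPB : (Φ B)⁻¹ = (1 - t) • (Φ Y⁻¹)⁻¹ := by
    have htne : ((1 - t : ℝ) : ℂ) ≠ 0 := Complex.ofReal_ne_zero.mpr h1t.ne'
    have hYdet : IsUnit Y.det := (Matrix.isUnit_iff_isUnit_det _).mp hY.isUnit
    have h1 : B = ((1 - t : ℝ) : ℂ)⁻¹ • Y⁻¹ := by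
      rw [hBdef]
      refine Matrix.inv_eq_right_inv ?_
      rw [Matrix.smul_mul, Matrix.mul_smul, smul_smul,
        Matrix.mul_nonsing_inv _ hYdet, mul_inv_cancel₀ htne, one_smul]
    have hΦYdet : IsUnit (Φ Y⁻¹).det :=
      (Matrix.isUnit_iff_isUnit_det _).mp (hΦ _ hY.inv).isUnit
    have h2 : (((1 - t : ℝ) : ℂ)⁻¹ • Φ Y⁻¹)⁻¹ = ((1 - t : ℝ) : ℂ) • (Φ Y⁻¹)⁻¹ := by
      refine Matrix.inv_eq_right_inv ?_
      rw [Matrix.smul_mul, Matrix.mul_smul, smul_smul,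
        Matrix.mul_nonsing_inv _ hΦYdet, inv_mul_cancel₀ htne, one_smul]
    rw [h1, _root_.map_smul, h2, ← real_smul_matrix]
  have hfinal : t • (Φ X⁻¹)⁻¹ + (1 - t) • (Φ Y⁻¹)⁻¹ = (Φ A)⁻¹ + (Φ B)⁻¹ := by
    rw [hPA, hPB]
  rw [hfinal]
  exact conj
end

section
/- If Φ : Mₘ(ℂ) → Mₙ(ℂ) is a positive linear map and X, Y are positive definite matrices, then Φ(X # Y) ≤ Φ(X) # Φ(Y), where # is the geometric mean (assuming Φ(X), Φ(Y) positive definite). -/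
open Matrix ComplexOrder

/-- The geometric mean `A # B = A^{1/2} (A^{-1/2} B A^{-1/2})^{1/2} A^{1/2}`. -/
noncomputable def geoMean {n : ℕ} (A B : Matrix (Fin n) (Fin n) ℂ) :
    Matrix (Fin n) (Fin n) ℂ :=
  cfc Real.sqrt A * cfc Real.sqrt ((cfc Real.sqrt A)⁻¹ * B * (cfc Real.sqrt A)⁻¹) *
    cfc Real.sqrt A

section AuxLemmas

set_option linter.unusedSectionVars false

open scoped MatrixOrder

variable {n : Type*} [Fintype n] [DecidableEq n]


variable {n : Type*} [Fintype n] [DecidableEq n]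

lemma cfc_sqrt_eq_sqrt {A : Matrix n n ℂ} (hA : A.PosSemidef) :
    cfc Real.sqrt A = CFC.sqrt A := by
  rw [CFC.sqrt_eq_real_sqrt A hA.nonneg, cfcₙ_eq_cfc]

lemma Matrix.PosSemidef.posDef_of_isUnit_det {A : Matrix n n ℂ} (hA : A.PosSemidef)
    (h : IsUnit A.det) : A.PosDef := by
  refine .of_dotProduct_mulVec_pos hA.1 fun x hx =>
    (hA.dotProduct_mulVec_nonneg x).lt_of_ne' fun h0 => hx ?_
  have hz : A *ᵥ x = 0 := (hA.dotProduct_mulVec_zero_iff x).mp h0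
  have hinj := Matrix.mulVec_injective_iff_isUnit.mpr (isUnit_iff_isUnit_det _ |>.2 h)
  have := hinj (by simpa using hz : A *ᵥ x = A *ᵥ 0)
  exact this

lemma posDef_cfc_sqrt {A : Matrix n n ℂ} (hA : A.PosDef) : (cfc Real.sqrt A).PosDef := by
  rw [cfc_sqrt_eq_sqrt hA.posSemidef]
  refine (CFC.sqrt_nonneg A).posSemidef.posDef_of_isUnit_det ?_
  have hd : (CFC.sqrt A).det * (CFC.sqrt A).det = A.det := by
    rw [← det_mul, CFC.sqrt_mul_sqrt_self A hA.posSemidef.nonneg]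
  have : IsUnit ((CFC.sqrt A).det * (CFC.sqrt A).det) := hd ▸ hA.det_pos.ne'.isUnit
  exact isUnit_of_mul_isUnit_left this

lemma cfc_sqrt_mul_self {A : Matrix n n ℂ} (hA : A.PosSemidef) :
    cfc Real.sqrt A * cfc Real.sqrt A = A := by
  rw [cfc_sqrt_eq_sqrt hA, CFC.sqrt_mul_sqrt_self A hA.nonneg]

lemma cfc_sqrt_posSemidef {A : Matrix n n ℂ} (hA : A.PosSemidef) :
    (cfc Real.sqrt A).PosSemidef := by
  rw [cfc_sqrt_eq_sqrt hA]
  exact (CFC.sqrt_nonneg A).posSemidef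

lemma Matrix.PosDef.conj {A B : Matrix n n ℂ} (hA : A.PosDef) (hB : IsUnit B.det) :
    (Bᴴ * A * B).PosDef := by
  refine (hA.posSemidef.conjTranspose_mul_mul_same B).posDef_of_isUnit_det ?_
  rw [det_mul, det_mul, det_conjTranspose]
  exact (hB.star.mul hA.det_pos.ne'.isUnit).mul hB


lemma diag_eq_sum (c : n → ℂ) :
    diagonal c = ∑ i, c i • diagonal (Pi.single i 1 : n → ℂ) := by
  ext j k
  simp [diagonal_apply, Matrix.sum_apply, Pi.single_apply]

lemma conj_diag_sum (U : Matrix n n ℂ) (c : n → ℂ) :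
    U * diagonal c * Uᴴ = ∑ i, c i • (U * diagonal (Pi.single i 1) * Uᴴ) := by
  rw [diag_eq_sum c, Finset.mul_sum, Finset.sum_mul]
  simp [mul_smul_comm, smul_mul_assoc]

lemma conj_diag_mul {U : Matrix n n ℂ} (hU : Uᴴ * U = 1) (c d : n → ℂ) :
    (U * diagonal c * Uᴴ) * (U * diagonal d * Uᴴ) = U * diagonal (c * d) * Uᴴ := by
  calc (U * diagonal c * Uᴴ) * (U * diagonal d * Uᴴ)
      = U * diagonal c * (Uᴴ * U) * diagonal d * Uᴴ := by
        simp only [mul_assoc]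
    _ = U * (diagonal c * diagonal d) * Uᴴ := by rw [hU, mul_one]; simp only [mul_assoc]
    _ = U * diagonal (c * d) * Uᴴ := by rw [diagonal_mul_diagonal]; rfl


local notation "nsq" v => ∑ j, Complex.normSq (v j)

lemma dot_star_self_eq (v : n → ℂ) : star v ⬝ᵥ v = ((nsq v : ℝ) : ℂ) := by
  push_cast
  simp [dotProduct, Complex.normSq_eq_conj_mul_self]

lemma conj_factor_dot (B : Matrix n n ℂ) (u v : n → ℂ) :
    star u ⬝ᵥ (Bᴴ * B) *ᵥ v = star (B *ᵥ u) ⬝ᵥ (B *ᵥ v) := by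
  rw [← mulVec_mulVec, dotProduct_mulVec, star_mulVec]

lemma dot_cs (a b : n → ℂ) :
    ‖star a ⬝ᵥ b‖ ≤ Real.sqrt (nsq a) * Real.sqrt (nsq b) := by
  have h := norm_inner_le_norm (𝕜 := ℂ) (WithLp.toLp 2 a : EuclideanSpace ℂ n)
    (WithLp.toLp 2 b : EuclideanSpace ℂ n)
  rw [EuclideanSpace.inner_toLp_toLp, dotProduct_comm] at h
  have ha : ‖(WithLp.toLp 2 a : EuclideanSpace ℂ n)‖ = Real.sqrt (nsq a) := by
    rw [EuclideanSpace.norm_eq]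
    congr 1
    refine Finset.sum_congr rfl fun j _ => ?_
    simp [Complex.normSq_eq_norm_sq]
  have hb : ‖(WithLp.toLp 2 b : EuclideanSpace ℂ n)‖ = Real.sqrt (nsq b) := by
    rw [EuclideanSpace.norm_eq]
    congr 1
    refine Finset.sum_congr rfl fun j _ => ?_
    simp [Complex.normSq_eq_norm_sq]
  rw [ha, hb] at h
  exact h

lemma sum_mulVec' {ι : Type*} (s : Finset ι) (M : ι → Matrix n n ℂ) (v : n → ℂ) :
    (∑ i ∈ s, M i) *ᵥ v = ∑ i ∈ s, (M i *ᵥ v) := by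
  ext j
  simp only [Matrix.mulVec, dotProduct, Finset.sum_apply, Matrix.sum_apply,
    Finset.sum_mul]
  rw [Finset.sum_comm]

lemma dotProduct_sum' {ι : Type*} (s : Finset ι) (u : n → ℂ) (v : ι → n → ℂ) :
    u ⬝ᵥ (∑ i ∈ s, v i) = ∑ i ∈ s, u ⬝ᵥ (v i) := by
  simp only [dotProduct, Finset.sum_apply, Finset.mul_sum]
  rw [Finset.sum_comm]

lemma key_cs {ι : Type*} [Fintype ι] (R : ι → Matrix n n ℂ) (hR : ∀ i, (R i).PosSemidef)
    (hsum : ∑ i, R i = 1) (t : ι → ℝ) :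
    ((∑ i, ((t i : ℂ)) ^ 2 • R i) - (∑ i, (t i : ℂ) • R i) * (∑ i, (t i : ℂ) • R i)).PosSemidef
    := by
  set C : Matrix n n ℂ := ∑ i, (t i : ℂ) • R i with hC
  set D : Matrix n n ℂ := ∑ i, ((t i : ℂ)) ^ 2 • R i with hD
  have hCH : Cᴴ = C := by
    rw [hC, conjTranspose_sum]
    refine Finset.sum_congr rfl fun i _ => ?_
    rw [conjTranspose_smul, (hR i).1.eq]
    simp
  have hDH : Dᴴ = D := by
    rw [hD, conjTranspose_sum]
    refine Finset.sum_congr rfl fun i _ => ?_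
    rw [conjTranspose_smul, (hR i).1.eq]
    simp [← Complex.ofReal_pow]
  refine PosSemidef.of_dotProduct_mulVec_nonneg ?_ ?_
  · exact IsHermitian.sub hDH (show (C * C)ᴴ = C * C by rw [conjTranspose_mul, hCH])
  intro x
  have hBex : ∀ i, ∃ B : Matrix n n ℂ, R i = Bᴴ * B := fun i =>
    ⟨CFC.sqrt (R i), by
      rw [(CFC.sqrt_nonneg (R i)).posSemidef.1.eq, CFC.sqrt_mul_sqrt_self _ (hR i).nonneg]⟩
  choose B hB using hBex
  set w : n → ℂ := C *ᵥ x with hw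
  set α : ι → n → ℂ := fun i => B i *ᵥ w with hα
  set β : ι → n → ℂ := fun i => B i *ᵥ x with hβ
  have hstarw : star x ᵥ* C = star w := by rw [hw, star_mulVec, hCH]
  have eq1 : star x ⬝ᵥ (C * C) *ᵥ x = ((nsq w : ℝ) : ℂ) := by
    rw [← mulVec_mulVec, dotProduct_mulVec, hstarw, dot_star_self_eq]
  have eq2 : star x ⬝ᵥ D *ᵥ x = ((∑ i, (t i) ^ 2 * (nsq (β i)) : ℝ) : ℂ) := by
    rw [hD, sum_mulVec', dotProduct_sum' _ _ _]
    push_cast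
    refine Finset.sum_congr rfl fun i _ => ?_
    rw [smul_mulVec, dotProduct_smul, hB i, conj_factor_dot, dot_star_self_eq]
    simp only [hβ, smul_eq_mul]
    push_cast
    ring
  have eq3c : ((nsq w : ℝ) : ℂ) = ∑ i, (t i : ℂ) * (star (α i) ⬝ᵥ (β i)) := by
    rw [← dot_star_self_eq]
    have : star w ⬝ᵥ w = star w ⬝ᵥ C *ᵥ x := rfl
    rw [this, hC, sum_mulVec', dotProduct_sum' _ _ _]
    refine Finset.sum_congr rfl fun i _ => ?_
    rw [smul_mulVec, dotProduct_smul, hB i, conj_factor_dot]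
    rfl
  have eq3 : (nsq w) = ∑ i, t i * ((star (α i) ⬝ᵥ (β i)).re) := by
    have := congrArg Complex.re eq3c
    simpa [Complex.re_sum, Complex.re_ofReal_mul] using this
  have eq4 : (nsq w) = ∑ i, (nsq (α i)) := by
    have h4 : ((nsq w : ℝ) : ℂ) = ((∑ i, (nsq (α i)) : ℝ) : ℂ) := by
      rw [← dot_star_self_eq]
      have hw1 : star w ⬝ᵥ w = star w ⬝ᵥ (∑ i, R i) *ᵥ w := by rw [hsum, one_mulVec]
      rw [hw1, sum_mulVec', dotProduct_sum' _ _ _]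
      push_cast
      refine Finset.sum_congr rfl fun i _ => ?_
      rw [hB i, conj_factor_dot, dot_star_self_eq]
      simp only [hα]
      push_cast
      rfl
    exact_mod_cast h4
  have hNnonneg : 0 ≤ (nsq w) := Finset.sum_nonneg fun j _ => Complex.normSq_nonneg _
  have hr : ∀ i, t i * ((star (α i) ⬝ᵥ (β i)).re) ≤
      |t i| * (Real.sqrt (nsq (α i)) * Real.sqrt (nsq (β i))) := by
    intro i
    calc t i * ((star (α i) ⬝ᵥ (β i)).re) ≤ |t i * ((star (α i) ⬝ᵥ (β i)).re)| := le_abs_self _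
      _ = |t i| * |(star (α i) ⬝ᵥ (β i)).re| := abs_mul _ _
      _ ≤ |t i| * ‖star (α i) ⬝ᵥ (β i)‖ := by
          gcongr
          exact Complex.abs_re_le_norm _
      _ ≤ |t i| * (Real.sqrt (nsq (α i)) * Real.sqrt (nsq (β i))) := by
          gcongr
          exact dot_cs _ _
  have hNle : (nsq w) ≤ ∑ i, |t i| * (Real.sqrt (nsq (α i)) * Real.sqrt (nsq (β i))) :=
    eq3 ▸ Finset.sum_le_sum fun i _ => hr i
  have hcs2 : (∑ i, |t i| * (Real.sqrt (nsq (α i)) * Real.sqrt (nsq (β i)))) ^ 2 ≤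
      (∑ i, (nsq (α i))) * (∑ i, (t i) ^ 2 * (nsq (β i))) := by
    refine Finset.sum_sq_le_sum_mul_sum_of_sq_eq_mul Finset.univ
      (f := fun i => nsq (α i)) (g := fun i => (t i) ^ 2 * (nsq (β i))) ?_ ?_ ?_
    · exact fun i _ => Finset.sum_nonneg fun j _ => Complex.normSq_nonneg _
    · exact fun i _ => mul_nonneg (sq_nonneg _) (Finset.sum_nonneg fun j _ =>
        Complex.normSq_nonneg _)
    · intro i _
      have h1 : 0 ≤ (nsq (α i)) := Finset.sum_nonneg fun j _ => Complex.normSq_nonneg _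
      have h2 : 0 ≤ (nsq (β i)) := Finset.sum_nonneg fun j _ => Complex.normSq_nonneg _
      rw [mul_pow, mul_pow, sq_abs, Real.sq_sqrt h1, Real.sq_sqrt h2]
      ring
  have hdDnonneg : 0 ≤ ∑ i, (t i) ^ 2 * (nsq (β i)) := Finset.sum_nonneg fun i _ =>
    mul_nonneg (sq_nonneg _) (Finset.sum_nonneg fun j _ => Complex.normSq_nonneg _)
  have hfinal : (nsq w) ≤ ∑ i, (t i) ^ 2 * (nsq (β i)) := by
    rcases eq_or_lt_of_le hNnonneg with h0 | hpos
    · rw [← h0]; exact hdDnonneg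
    · have hsq : (nsq w) ^ 2 ≤ (nsq w) * (∑ i, (t i) ^ 2 * (nsq (β i))) :=
        le_trans (pow_le_pow_left₀ hNnonneg hNle 2) (eq4 ▸ hcs2)
      rw [pow_two] at hsq
      exact le_of_mul_le_mul_left hsq hpos
  rw [sub_mulVec, dotProduct_sub, eq1, eq2, ← Complex.ofReal_sub, Complex.zero_le_real]
  exact sub_nonneg.mpr hfinal

lemma psd_of_sq_le_sq {C E : Matrix n n ℂ} (hC : C.IsHermitian) (hE : E.PosSemidef)
    (h : (E * E - C * C).PosSemidef) : (E - C).PosSemidef := by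
  have hM : (E - C).IsHermitian := hE.1.sub hC
  refine hM.posSemidef_iff_eigenvalues_nonneg.mpr fun i => ?_
  by_contra hneg
  push_neg at hneg
  simp only [Pi.zero_apply] at hneg
  set μ : ℝ := hM.eigenvalues i with hμ
  set v : n → ℂ := ⇑(hM.eigenvectorBasis i) with hv
  have hv0 : v ≠ 0 := by
    intro h0
    exact hM.eigenvectorBasis.orthonormal.ne_zero i (by ext j; exact congrFun h0 j)
  have heig : (E - C) *ᵥ v = (μ : ℂ) • v := by
    have hsm : (μ : ℂ) • v = μ • v := by
      ext j
      simp [Complex.real_smul]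
    rw [hsm]
    exact hM.mulVec_eigenvectorBasis i
  have hCv : C *ᵥ v = E *ᵥ v - (μ : ℂ) • v := by
    rw [← heig, sub_mulVec]
    abel
  set e : n → ℂ := E *ᵥ v with he
  set q : ℂ := star v ⬝ᵥ e with hq
  have hqnonneg : 0 ≤ q := hE.dotProduct_mulVec_nonneg v
  have hstare : star e = star v ᵥ* E := by rw [he, star_mulVec, hE.1.eq]
  have hqe : star e ⬝ᵥ v = q := by
    rw [hstare, ← dotProduct_mulVec, ← he, hq]
  have hvv' : star v ⬝ᵥ v = ((∑ j, Complex.normSq (v j) : ℝ) : ℂ) := by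
    push_cast
    simp [dotProduct, Complex.normSq_eq_conj_mul_self]
  set nv : ℝ := ∑ j, Complex.normSq (v j) with hnv
  have hvv : star v ⬝ᵥ v = (nv : ℂ) := hvv'
  have hnvpos : 0 < nv := by
    have hle : 0 ≤ nv := Finset.sum_nonneg fun j _ => Complex.normSq_nonneg _
    rcases hle.eq_or_lt with h0 | h0
    · exfalso
      apply hv0
      ext j
      have : Complex.normSq (v j) = 0 := by
        have := (Finset.sum_eq_zero_iff_of_nonneg
          (fun j _ => Complex.normSq_nonneg (v j))).mp h0.symm j (Finset.mem_univ j)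
        exact this
      simpa [Complex.normSq_eq_zero] using this
    · exact h0
  -- quadratic form identities
  have hCC : star v ⬝ᵥ (C * C) *ᵥ v = star (C *ᵥ v) ⬝ᵥ (C *ᵥ v) := by
    rw [← mulVec_mulVec, dotProduct_mulVec]
    congr 1
    rw [star_mulVec, hC.eq]
  have hEE : star v ⬝ᵥ (E * E) *ᵥ v = star e ⬝ᵥ e := by
    rw [← mulVec_mulVec, dotProduct_mulVec, ← hstare, he]
  have hexp : star (C *ᵥ v) ⬝ᵥ (C *ᵥ v)
      = star e ⬝ᵥ e - 2 * (μ : ℂ) * q + (μ : ℂ) ^ 2 * (nv : ℂ) := by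
    rw [hCv]
    rw [star_sub, sub_dotProduct, dotProduct_sub, dotProduct_sub, star_smul]
    rw [smul_dotProduct, smul_dotProduct, dotProduct_smul, dotProduct_smul]
    rw [hqe, ← hq, hvv]
    simp only [smul_eq_mul, RCLike.star_def, Complex.conj_ofReal]
    ring
  have h0 := h.dotProduct_mulVec_nonneg v
  rw [sub_mulVec, dotProduct_sub, hEE, hCC, hexp] at h0
  have hdiff : (star e ⬝ᵥ e) - (star e ⬝ᵥ e - 2 * (μ : ℂ) * q + (μ : ℂ) ^ 2 * (nv : ℂ))
      = 2 * (μ : ℂ) * q - (μ : ℂ) ^ 2 * (nv : ℂ) := by ring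
  rw [hdiff] at h0
  have hqre : 0 ≤ q.re := (RCLike.nonneg_iff.mp hqnonneg).1
  have h2 : (2 * (μ : ℂ) * q).re = 2 * μ * q.re := by
    have hh : (2 * (μ : ℂ) * q) = ((2 * μ : ℝ) : ℂ) * q := by push_cast; ring
    rw [hh, Complex.re_ofReal_mul]
    try ring
  have h3 : ((μ : ℂ) ^ 2 * (nv : ℂ)).re = μ ^ 2 * nv := by
    rw [← Complex.ofReal_pow, ← Complex.ofReal_mul, Complex.ofReal_re]
  have h0re := (Complex.le_def.mp h0).1
  rw [Complex.sub_re, h2, h3, Complex.zero_re] at h0re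
  nlinarith [sq_nonneg μ, hnvpos, hqre, mul_pos (mul_pos_of_neg_of_neg hneg hneg) hnvpos]

end AuxLemmas

/-- A positive linear map is subadditive with respect to the geometric mean:
`Φ(X # Y) ≤ Φ(X) # Φ(Y)` in the Loewner order. -/
theorem posMap_geoMean {m n : ℕ}
    (Φ : Matrix (Fin m) (Fin m) ℂ →ₗ[ℂ] Matrix (Fin n) (Fin n) ℂ)
    (hΦ : ∀ A : Matrix (Fin m) (Fin m) ℂ, A.PosSemidef → (Φ A).PosSemidef)
    (X Y : Matrix (Fin m) (Fin m) ℂ) (hX : X.PosDef) (hY : Y.PosDef)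
    (hXp : (Φ X).PosDef) (hYp : (Φ Y).PosDef) :
    (geoMean (Φ X) (Φ Y) - Φ (geoMean X Y)).PosSemidef := by
  classical
  -- domain side
  set S : Matrix (Fin m) (Fin m) ℂ := cfc Real.sqrt X with hSdef
  have hS : S.PosDef := posDef_cfc_sqrt hX
  have hSH : Sᴴ = S := hS.1
  have hSdet : IsUnit S.det := hS.det_pos.ne'.isUnit
  have hSS : S * S = X := cfc_sqrt_mul_self hX.posSemidef
  have hSinv : S⁻¹.PosDef := hS.inv
  have hSinvH : (S⁻¹)ᴴ = S⁻¹ := hSinv.1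
  have hMpd : (S⁻¹ * Y * S⁻¹).PosDef := by
    have := hY.conj (B := S⁻¹) hSinv.det_pos.ne'.isUnit
    rwa [hSinvH] at this
  set T : Matrix (Fin m) (Fin m) ℂ := cfc Real.sqrt (S⁻¹ * Y * S⁻¹) with hTdef
  have hT : T.PosDef := posDef_cfc_sqrt hMpd
  have hTT : T * T = S⁻¹ * Y * S⁻¹ := cfc_sqrt_mul_self hMpd.posSemidef
  have hTH : T.IsHermitian := hT.1
  have hG : geoMean X Y = S * T * S := rfl
  -- spectral decomposition of T
  set U : Matrix (Fin m) (Fin m) ℂ := (hTH.eigenvectorUnitary : Matrix (Fin m) (Fin m) ℂ)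
    with hU
  have hUU : Uᴴ * U = 1 := by
    rw [← star_eq_conjTranspose]
    exact Unitary.coe_star_mul_self hTH.eigenvectorUnitary
  set t : Fin m → ℝ := hTH.eigenvalues with ht
  set P : Fin m → Matrix (Fin m) (Fin m) ℂ :=
    fun i => U * diagonal (Pi.single i 1) * Uᴴ with hP
  have hPpsd : ∀ i, (P i).PosSemidef := by
    intro i
    refine PosSemidef.mul_mul_conjTranspose_same ?_ U
    refine posSemidef_diagonal_iff.mpr fun j => ?_
    rcases eq_or_ne j i with rfl | hne
    · simp
    · simp [Pi.single_apply, hne]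
  have hTspec : T = U * diagonal (RCLike.ofReal ∘ hTH.eigenvalues) * Uᴴ := by
    have h := hTH.spectral_theorem
    rw [Unitary.conjStarAlgAut_apply, star_eq_conjTranspose] at h
    rw [← hU] at h
    exact h
  have hTsum : T = ∑ i, (t i : ℂ) • P i := by
    calc T = U * diagonal (RCLike.ofReal ∘ hTH.eigenvalues) * Uᴴ := hTspec
      _ = ∑ i, (t i : ℂ) • P i := by
          rw [conj_diag_sum U (RCLike.ofReal ∘ hTH.eigenvalues)]
          rfl
  have hT2sum : T * T = ∑ i, ((t i : ℂ)) ^ 2 • P i := by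
    calc T * T = (U * diagonal (RCLike.ofReal ∘ hTH.eigenvalues) * Uᴴ)
          * (U * diagonal (RCLike.ofReal ∘ hTH.eigenvalues) * Uᴴ) := by rw [← hTspec]
      _ = U * diagonal ((RCLike.ofReal ∘ hTH.eigenvalues) * (RCLike.ofReal ∘ hTH.eigenvalues))
          * Uᴴ := conj_diag_mul hUU _ _
      _ = ∑ i, ((t i : ℂ)) ^ 2 • P i := by
          rw [conj_diag_sum U _]
          refine Finset.sum_congr rfl fun i _ => ?_
          congr 1
          simp [pow_two]
          rfl
  have hUUc : U * Uᴴ = 1 := by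
    rw [← star_eq_conjTranspose]
    exact Unitary.coe_mul_star_self hTH.eigenvectorUnitary
  have hOne : (1 : Matrix (Fin m) (Fin m) ℂ) = ∑ i, P i := by
    have hcd := conj_diag_sum U (fun _ => (1 : ℂ))
    simp only [one_smul] at hcd
    calc (1 : Matrix (Fin m) (Fin m) ℂ)
        = U * diagonal (fun _ => (1 : ℂ)) * Uᴴ := by
          rw [show diagonal (fun _ : Fin m => (1:ℂ)) = 1 from diagonal_one, mul_one, hUUc]
      _ = ∑ i, P i := by rw [hcd]
  set K : Fin m → Matrix (Fin m) (Fin m) ℂ := fun i => S * P i * S with hK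
  have hKpsd : ∀ i, (K i).PosSemidef := by
    intro i
    have := (hPpsd i).conjTranspose_mul_mul_same (B := S)
    rw [hSH] at this
    exact this
  have hXsum : X = ∑ i, K i := by
    calc X = S * 1 * S := by rw [mul_one, hSS]
      _ = S * (∑ i, P i) * S := by rw [← hOne]
      _ = ∑ i, K i := by rw [Finset.mul_sum, Finset.sum_mul]
  have hGsum : geoMean X Y = ∑ i, (t i : ℂ) • K i := by
    rw [hG, hTsum, Finset.mul_sum, Finset.sum_mul]
    refine Finset.sum_congr rfl fun i _ => ?_
    rw [mul_smul_comm, smul_mul_assoc]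
  have hYsum : Y = ∑ i, ((t i : ℂ)) ^ 2 • K i := by
    have hY2 : Y = S * (T * T) * S := by
      rw [hTT, ← mul_assoc, ← mul_assoc, Matrix.mul_nonsing_inv S hSdet, one_mul,
        mul_assoc, Matrix.nonsing_inv_mul S hSdet, mul_one]
    rw [hY2, hT2sum, Finset.mul_sum, Finset.sum_mul]
    refine Finset.sum_congr rfl fun i _ => ?_
    rw [mul_smul_comm, smul_mul_assoc]
  -- codomain side
  set W : Matrix (Fin n) (Fin n) ℂ := cfc Real.sqrt (Φ X) with hWdef
  have hWpd : W.PosDef := posDef_cfc_sqrt hXp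
  have hWH : Wᴴ = W := hWpd.1
  have hWdet : IsUnit W.det := hWpd.det_pos.ne'.isUnit
  have hWW : W * W = Φ X := cfc_sqrt_mul_self hXp.posSemidef
  have hWinv : W⁻¹.PosDef := hWpd.inv
  have hWinvH : (W⁻¹)ᴴ = W⁻¹ := hWinv.1
  set F : Fin m → Matrix (Fin n) (Fin n) ℂ := fun i => Φ (K i) with hF
  have hFpsd : ∀ i, (F i).PosSemidef := fun i => hΦ _ (hKpsd i)
  set R : Fin m → Matrix (Fin n) (Fin n) ℂ := fun i => W⁻¹ * F i * W⁻¹ with hR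
  have hRpsd : ∀ i, (R i).PosSemidef := by
    intro i
    have := (hFpsd i).conjTranspose_mul_mul_same (B := W⁻¹)
    rw [hWinvH] at this
    exact this
  have hFX : Φ X = ∑ i, F i := by rw [hXsum, map_sum]
  have hRsum : ∑ i, R i = 1 := by
    have h1 : ∑ i, W⁻¹ * F i * W⁻¹ = W⁻¹ * (∑ i, F i) * W⁻¹ := by
      rw [Finset.mul_sum, Finset.sum_mul]
    rw [h1, ← hFX, ← hWW, ← mul_assoc,
      Matrix.nonsing_inv_mul W hWdet, one_mul, Matrix.mul_nonsing_inv W hWdet]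
  have hΦG : Φ (geoMean X Y) = ∑ i, (t i : ℂ) • F i := by
    rw [hGsum, map_sum]
    refine Finset.sum_congr rfl fun i _ => ?_
    exact Φ.map_smul _ _
  have hΦY : Φ Y = ∑ i, ((t i : ℂ)) ^ 2 • F i := by
    nth_rewrite 1 [hYsum]
    rw [map_sum]
    refine Finset.sum_congr rfl fun i _ => ?_
    exact Φ.map_smul _ _
  have hCdef : W⁻¹ * Φ (geoMean X Y) * W⁻¹ = ∑ i, (t i : ℂ) • R i := by
    rw [hΦG, Finset.mul_sum, Finset.sum_mul]
    refine Finset.sum_congr rfl fun i _ => ?_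
    rw [mul_smul_comm, smul_mul_assoc]
  have hDdef : W⁻¹ * Φ Y * W⁻¹ = ∑ i, ((t i : ℂ)) ^ 2 • R i := by
    rw [hΦY, Finset.mul_sum, Finset.sum_mul]
    refine Finset.sum_congr rfl fun i _ => ?_
    rw [mul_smul_comm, smul_mul_assoc]
  have hkey := key_cs R hRpsd hRsum t
  -- the square root in the codomain
  have hDpd : (W⁻¹ * Φ Y * W⁻¹).PosDef := by
    have := hYp.conj (B := W⁻¹) hWinv.det_pos.ne'.isUnit
    rwa [hWinvH] at this
  set E : Matrix (Fin n) (Fin n) ℂ := cfc Real.sqrt (W⁻¹ * Φ Y * W⁻¹) with hEdef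
  have hEpsd : E.PosSemidef := by
    rw [hEdef]
    exact cfc_sqrt_posSemidef hDpd.posSemidef
  have hEE : E * E = W⁻¹ * Φ Y * W⁻¹ := cfc_sqrt_mul_self hDpd.posSemidef
  -- C is Hermitian
  have hGpsd : (geoMean X Y).PosSemidef := by
    rw [hG]
    have := hT.posSemidef.conjTranspose_mul_mul_same (B := S)
    rwa [hSH] at this
  have hΦGpsd : (Φ (geoMean X Y)).PosSemidef := hΦ _ hGpsd
  have hCmpsd : (W⁻¹ * Φ (geoMean X Y) * W⁻¹).PosSemidef := by
    have := hΦGpsd.conjTranspose_mul_mul_same (B := W⁻¹)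
    rwa [hWinvH] at this
  have hEC : (E - W⁻¹ * Φ (geoMean X Y) * W⁻¹).PosSemidef := by
    refine psd_of_sq_le_sq hCmpsd.1 hEpsd ?_
    rw [hEE, hDdef, hCdef]
    exact hkey
  -- conclude
  have hgoal : geoMean (Φ X) (Φ Y) - Φ (geoMean X Y)
      = W * (E - W⁻¹ * Φ (geoMean X Y) * W⁻¹) * W := by
    have h1 : geoMean (Φ X) (Φ Y) = W * E * W := rfl
    have h2 : W * (W⁻¹ * Φ (geoMean X Y) * W⁻¹) * W = Φ (geoMean X Y) := by
      rw [← mul_assoc, ← mul_assoc, Matrix.mul_nonsing_inv W hWdet, one_mul,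
        mul_assoc, Matrix.nonsing_inv_mul W hWdet, mul_one]
    rw [h1, mul_sub, sub_mul, h2]
  rw [hgoal]
  have := hEC.mul_mul_conjTranspose_same (B := W)
  rwa [hWH] at this
end
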